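/- Let Γ ⊆ ℝⁿ be an open convex cone containing the positive orthant, and let f : Γ → ℝ be concave with ∂f/∂λₙ > 0 (more weakly: f nondecreasing in the last coordinate). Define f_∞(λ') = lim_{s→∞} f(λ', s) ∈ ℝ ∪ {+∞} for λ' ∈ Γ_∞ (the projection of Γ onto the first n−1 coordinates). Then either f_∞(λ') = +∞ for every λ' ∈ Γ_∞, or f_∞(λ') < +∞ for every λ' ∈ Γ_∞. -/

import Mathlib

open Filter

/-- Trudinger's dichotomy: for a concave function `f` on an open convex cone Γ
containing the positive orthant, nondecreasing in the last coordinate, either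
`f(λ', s) → +∞` as `s → ∞` for every `λ'` in the projection `Γ_∞`, or the limit
is finite (the tail is bounded) for every `λ' ∈ Γ_∞`. -/
theorem stmt_2 (n : ℕ) (Γ : Set (Fin (n + 1) → ℝ))
    (hopen : IsOpen Γ) (hconv : Convex ℝ Γ)
    (hcone : ∀ x ∈ Γ, ∀ c : ℝ, 0 < c → c • x ∈ Γ)
    (horth : {x : Fin (n + 1) → ℝ | ∀ i, 0 < x i} ⊆ Γ)
    (f : (Fin (n + 1) → ℝ) → ℝ)
    (hconc : ConcaveOn ℝ Γ f)
    (hmono : ∀ (l : Fin n → ℝ) (s t : ℝ), s ≤ t →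
      Fin.snoc l s ∈ Γ → Fin.snoc l t ∈ Γ → f (Fin.snoc l s) ≤ f (Fin.snoc l t)) :
    (∀ l : Fin n → ℝ, (∃ s : ℝ, Fin.snoc l s ∈ Γ) →
      Tendsto (fun s : ℝ => f (Fin.snoc l s)) atTop atTop) ∨
    (∀ l : Fin n → ℝ, (∃ s : ℝ, Fin.snoc l s ∈ Γ) →
      ∃ B : ℝ, ∀ s : ℝ, Fin.snoc l s ∈ Γ → f (Fin.snoc l s) ≤ B) := by
  -- Γ is closed under addition
  have hadd : ∀ x ∈ Γ, ∀ y ∈ Γ, x + y ∈ Γ := by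
    intro x hx y hy
    have h := hconv hx hy (by norm_num : (0:ℝ) ≤ 1/2) (by norm_num : (0:ℝ) ≤ 1/2)
      (by norm_num)
    have h2 := hcone _ h 2 (by norm_num)
    convert h2 using 1
    module
  -- Γ is upward closed in the last coordinate
  have hup : ∀ (l : Fin n → ℝ) (s t : ℝ), s ≤ t → Fin.snoc l s ∈ Γ → Fin.snoc l t ∈ Γ := by
    intro l s t hst hs
    obtain ⟨ε, hε, hball⟩ := Metric.isOpen_iff.mp hopen _ hs
    set c := ε / 2 with hc
    have hcpos : 0 < c := by positivity
    have hclt : c < ε := by rw [hc]; linarith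
    have hy : Fin.snoc (fun i => l i - c) (s - c) ∈ Γ := by
      apply hball
      rw [Metric.mem_ball, dist_pi_lt_iff hε]
      intro i
      refine Fin.lastCases ?_ (fun j => ?_) i
      · simp only [Fin.snoc_last]
        rw [Real.dist_eq, show s - c - s = -c by ring, abs_neg, abs_of_pos hcpos]
        exact hclt
      · simp only [Fin.snoc_castSucc]
        rw [Real.dist_eq, show l j - c - l j = -c by ring, abs_neg, abs_of_pos hcpos]
        exact hclt
    have heq : Fin.snoc l t =
        (Fin.snoc (fun i => l i - c) (s - c) : Fin (n+1) → ℝ) + (Fin.snoc (fun _ : Fin n => c) (t - s + c) : Fin (n+1) → ℝ) := by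
      funext i
      refine Fin.lastCases ?_ (fun j => ?_) i
      · simp only [Pi.add_apply, Fin.snoc_last]; ring
      · simp only [Pi.add_apply, Fin.snoc_castSucc]; ring
    rw [heq]
    refine hadd _ hy _ (horth ?_)
    intro i
    refine Fin.lastCases ?_ (fun j => ?_) i
    · simp only [Fin.snoc_last]; linarith
    · simpa only [Fin.snoc_castSucc] using hcpos
  by_cases H : ∀ l : Fin n → ℝ, (∃ s : ℝ, Fin.snoc l s ∈ Γ) →
      Tendsto (fun s : ℝ => f (Fin.snoc l s)) atTop atTop
  · exact Or.inl H
  · right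
    push_neg at H
    obtain ⟨l₀, ⟨s₀, hs₀⟩, hnt⟩ := H
    rw [tendsto_atTop] at hnt
    push_neg at hnt
    obtain ⟨M, hM⟩ := hnt
    -- the l₀-slice is bounded by M
    have hbound : ∀ s : ℝ, Fin.snoc l₀ s ∈ Γ → f (Fin.snoc l₀ s) ≤ M := by
      intro s hs
      obtain ⟨u, hu, hfu⟩ := frequently_atTop.mp hM s
      have huΓ : Fin.snoc l₀ u ∈ Γ := hup l₀ s u hu hs
      have := hmono l₀ s u hu hs huΓ
      linarith
    intro l hl
    obtain ⟨s₁, hs₁⟩ := hl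
    set x₀ : Fin (n + 1) → ℝ := Fin.snoc l₀ s₀ with hx₀
    set x : Fin (n + 1) → ℝ := Fin.snoc l s₁ with hx
    -- find small θ > 0 with x₀ - θ • x ∈ Γ
    have hcont : ContinuousAt (fun θ : ℝ => x₀ - θ • x) 0 := by fun_prop
    have hev : ∀ᶠ θ in nhds (0 : ℝ), x₀ - θ • x ∈ Γ := by
      apply hcont.eventually_mem
      rw [show x₀ - (0:ℝ) • x = x₀ by simp]
      exact hopen.mem_nhds hs₀
    obtain ⟨δ, hδ, hball⟩ := Metric.eventually_nhds_iff.mp hev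
    set θ : ℝ := min (δ / 2) (1 / 2) with hθdef
    have hθpos : 0 < θ := by positivity
    have hθlt1 : θ < 1 := lt_of_le_of_lt (min_le_right _ _) (by norm_num)
    have hθδ : dist θ (0 : ℝ) < δ := by
      rw [Real.dist_eq, sub_zero, abs_of_pos hθpos]
      exact lt_of_le_of_lt (min_le_left _ _) (by linarith)
    have hyΓ : x₀ - θ • x ∈ Γ := hball hθδ
    have h1θ : (0:ℝ) < 1 - θ := by linarith
    set z : Fin (n + 1) → ℝ := (1 - θ)⁻¹ • (x₀ - θ • x) with hz
    have hzΓ : z ∈ Γ := hcone _ hyΓ _ (by positivity)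
    refine ⟨(M - (1 - θ) * f z) / θ, fun s hs => ?_⟩
    have hcomb : θ • (Fin.snoc l s : Fin (n+1) → ℝ) + (1 - θ) • z ∈ Γ :=
      hconv hs hzΓ hθpos.le h1θ.le (by ring)
    have hzeq : (1 - θ) • z = x₀ - θ • x := smul_inv_smul₀ (by linarith) _
    have hcombeq : θ • (Fin.snoc l s : Fin (n+1) → ℝ) + (1 - θ) • z = (Fin.snoc l₀ (θ * s + s₀ - θ * s₁) : Fin (n+1) → ℝ) := by
      rw [hzeq, hx₀, hx]
      funext i
      refine Fin.lastCases ?_ (fun j => ?_) i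
      · simp only [Pi.add_apply, Pi.sub_apply, Pi.smul_apply, Fin.snoc_last, smul_eq_mul]
        ring
      · simp only [Pi.add_apply, Pi.sub_apply, Pi.smul_apply, Fin.snoc_castSucc, smul_eq_mul]
        ring
    have hcc := hconc.2 hs hzΓ hθpos.le h1θ.le (by ring)
    rw [hcombeq] at hcomb hcc
    have hle : f (Fin.snoc l₀ (θ * s + s₀ - θ * s₁)) ≤ M := hbound _ hcomb
    simp only [smul_eq_mul] at hcc
    rw [le_div_iff₀ hθpos]
    linarith
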